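/- Let p and q be probability vectors in ℝ^d with p majorizing q, and let r be any probability vector in ℝ^m. Then p ⊗ r majorizes q ⊗ r, where ⊗ denotes the Kronecker (tensor) product of vectors. -/

import Mathlib

private lemma sum_fiber_aux {d m : ℕ} (s : Finset (Fin d × Fin m)) (f : Fin d → Fin m → ℝ) :
    ∑ x ∈ s, f x.1 x.2 =
      ∑ j : Fin m, ∑ i ∈ (s.filter (fun x => x.2 = j)).image Prod.fst, f i j := by
  rw [← Finset.sum_fiberwise s (fun x => x.2) (fun x => f x.1 x.2)]
  refine Finset.sum_congr rfl fun j _ => ?_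
  rw [Finset.sum_image]
  · refine Finset.sum_congr rfl fun x hx => ?_
    simp only [Finset.mem_filter] at hx
    rw [hx.2]
  · intro a ha b hb hab
    simp only [Finset.mem_coe, Finset.mem_filter] at ha hb
    exact Prod.ext hab (ha.2.trans hb.2.symm)

/-- `p` majorizes `q`: for every `k`, the sum of the `k` largest entries of `p`
is at least the sum of the `k` largest entries of `q` (expressed via subsets),
and the total sums agree. -/
def Majorizes {α β : Type*} [Fintype α] [Fintype β] (p : α → ℝ) (q : β → ℝ) : Prop :=
  (∀ s : Finset β, ∃ t : Finset α, t.card = s.card ∧ ∑ i ∈ s, q i ≤ ∑ i ∈ t, p i) ∧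
  ∑ i, p i = ∑ i, q i

/-- Majorization is stable under tensoring with a fixed probability vector:
if `p ≻ q` then `p ⊗ r ≻ q ⊗ r`. -/
theorem majorization_tensor_stable {d m : ℕ} (p q : Fin d → ℝ) (r : Fin m → ℝ)
    (hp : (∀ i, 0 ≤ p i) ∧ ∑ i, p i = 1)
    (hq : (∀ i, 0 ≤ q i) ∧ ∑ i, q i = 1)
    (hr : (∀ j, 0 ≤ r j) ∧ ∑ j, r j = 1)
    (hmaj : Majorizes p q) :
    Majorizes (fun x : Fin d × Fin m => p x.1 * r x.2)
      (fun x : Fin d × Fin m => q x.1 * r x.2) := by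
  obtain ⟨hmaj1, _⟩ := hmaj
  constructor
  · intro s
    set fib : Fin m → Finset (Fin d) :=
      fun j => (s.filter (fun x => x.2 = j)).image Prod.fst with hfib
    choose t ht hsum using fun j => hmaj1 (fib j)
    have hdisj : (((Finset.univ : Finset (Fin m)) : Set (Fin m))).PairwiseDisjoint
        (fun j => (t j).image (fun i => (i, j))) := by
      intro a _ b _ hab
      simp only [Finset.disjoint_left, Finset.mem_image]
      rintro ⟨x, y⟩ ⟨i, _, hi⟩ ⟨i', _, hi'⟩
      exact hab ((congrArg Prod.snd hi).trans (congrArg Prod.snd hi').symm)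
    refine ⟨Finset.univ.biUnion (fun j => (t j).image (fun i => (i, j))), ?_, ?_⟩
    · rw [Finset.card_biUnion hdisj]
      have : ∀ j, ((t j).image (fun i => (i, j))).card = (fib j).card := by
        intro j
        rw [Finset.card_image_of_injective _ (fun a b h => congrArg Prod.fst h), ht]
      simp only [this, hfib]
      have hmaps : ∀ x ∈ s, x.2 ∈ (Finset.univ : Finset (Fin m)) := fun x _ => Finset.mem_univ _
      rw [Finset.card_eq_sum_card_fiberwise hmaps]
      refine Finset.sum_congr rfl fun j _ => ?_
      rw [Finset.card_image_of_injOn]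
      intro a ha b hb hab
      simp only [Finset.mem_coe, Finset.mem_filter] at ha hb
      exact Prod.ext hab (ha.2.trans hb.2.symm)
    · rw [sum_fiber_aux s (fun i j => q i * r j), Finset.sum_biUnion hdisj]
      refine Finset.sum_le_sum fun j _ => ?_
      have himg : ∑ x ∈ (t j).image (fun i => (i, j)), p x.1 * r x.2
          = (∑ i ∈ t j, p i) * r j := by
        rw [Finset.sum_image (fun a _ b _ h => congrArg Prod.fst h), Finset.sum_mul]
      rw [himg, ← Finset.sum_mul]
      exact mul_le_mul_of_nonneg_right (hsum j) (hr.1 j)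
  · simp only [Fintype.sum_prod_type, ← Finset.mul_sum, hr.2, mul_one, hp.2, hq.2]
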